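/- Let σ > 0, c₁ ≠ 0, γ ≠ 0, set β = (c₁+1)/c₁ and κ = σ²/(2γc₁²), and let W : ℝ → ℝ be twice differentiable with W''(z) − β·W'(z) ≠ 0 and W'(z) ≠ 0 for all z. Define u(S,t) = W(ln S − γt) for S > 0. Then: (a) u solves the special-model PDE u_t + (1/2)·σ²S²·u_SS·u_S² / (u_S − c₁·S·u_SS)² = 0 if and only if W satisfies the second-order ODE W' − κ·(W'' − W')·(W')² / (W'' − β·W')² = 0 on ℝ; and (b) this ODE holds if and only if Y = W' satisfies the first-order ODE (Y')² − (2β + κ)·Y·Y' + (β² + κ)·Y² = 0 on ℝ. (This is the reduction of the special model under the subgroup H₂, with invariants z = ln S − γt, W = u.) -/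

import Mathlib

open Real Set

/-- Partial derivative of `u(S,t)` with respect to `S`. -/
noncomputable def pS (u : ℝ → ℝ → ℝ) (S t : ℝ) : ℝ := deriv (fun s => u s t) S

/-- Second partial derivative of `u(S,t)` with respect to `S`. -/
noncomputable def pSS (u : ℝ → ℝ → ℝ) (S t : ℝ) : ℝ := deriv (fun s => pS u s t) S

/-- Partial derivative of `u(S,t)` with respect to `t`. -/
noncomputable def pt (u : ℝ → ℝ → ℝ) (S t : ℝ) : ℝ := deriv (fun τ => u S τ) t

/-- Reduction of the special model under the subgroup `H₂` (invariants
`z = ln S − γt`, `W = u`): with `β = (c₁+1)/c₁`, `κ = σ²/(2γc₁²)`, the ansatz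
`u(S,t) = W(ln S − γt)` solves the special-model PDE iff
`W' − κ (W'' − W')(W')²/(W'' − βW')² = 0`, which in turn holds iff `Y = W'`
satisfies `(Y')² − (2β+κ) Y Y' + (β²+κ) Y² = 0`. -/
theorem special_model_reduction_H2
    (σ c₁ γ β κ : ℝ) (hσ : 0 < σ) (hc₁ : c₁ ≠ 0) (hγ : γ ≠ 0)
    (hβ : β = (c₁ + 1) / c₁) (hκ : κ = σ ^ 2 / (2 * γ * c₁ ^ 2))
    (W : ℝ → ℝ) (hW : Differentiable ℝ W) (hW' : Differentiable ℝ (deriv W))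
    (hden : ∀ z : ℝ, deriv (deriv W) z - β * deriv W z ≠ 0)
    (hW0 : ∀ z : ℝ, deriv W z ≠ 0)
    (u : ℝ → ℝ → ℝ) (hu : u = fun S t => W (Real.log S - γ * t)) :
    ((∀ S ∈ Set.Ioi (0 : ℝ), ∀ t : ℝ,
      pt u S t + (1 / 2) * σ ^ 2 * S ^ 2 * pSS u S t * (pS u S t) ^ 2 /
        (pS u S t - c₁ * S * pSS u S t) ^ 2 = 0)
    ↔
    (∀ z : ℝ,
      deriv W z - κ * (deriv (deriv W) z - deriv W z) * (deriv W z) ^ 2 /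
        (deriv (deriv W) z - β * deriv W z) ^ 2 = 0)) ∧
    ((∀ z : ℝ,
      deriv W z - κ * (deriv (deriv W) z - deriv W z) * (deriv W z) ^ 2 /
        (deriv (deriv W) z - β * deriv W z) ^ 2 = 0)
    ↔
    (∀ z : ℝ,
      (deriv (deriv W) z) ^ 2 - (2 * β + κ) * deriv W z * deriv (deriv W) z +
        (β ^ 2 + κ) * (deriv W z) ^ 2 = 0)) := by
  have hpS : ∀ S : ℝ, 0 < S → ∀ t : ℝ,
      pS u S t = deriv W (Real.log S - γ * t) * S⁻¹ := by
    intro S hS t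
    have hin : HasDerivAt (fun s : ℝ => Real.log s - γ * t) S⁻¹ S :=
      (Real.hasDerivAt_log (ne_of_gt hS)).sub_const (γ * t)
    have h := ((hW (Real.log S - γ * t)).hasDerivAt.comp S hin)
    rw [pS, hu]
    exact h.deriv
  have hpSS : ∀ S : ℝ, 0 < S → ∀ t : ℝ,
      pSS u S t = (deriv (deriv W) (Real.log S - γ * t)
        - deriv W (Real.log S - γ * t)) * (S ^ 2)⁻¹ := by
    intro S hS t
    have hev : (fun s => pS u s t) =ᶠ[nhds S]
        (fun s => deriv W (Real.log s - γ * t) * s⁻¹) := by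
      filter_upwards [IsOpen.mem_nhds isOpen_Ioi hS] with s hs
      exact hpS s hs t
    rw [pSS, hev.deriv_eq]
    have hin : HasDerivAt (fun s : ℝ => Real.log s - γ * t) S⁻¹ S :=
      (Real.hasDerivAt_log (ne_of_gt hS)).sub_const (γ * t)
    have h1 : HasDerivAt (fun s : ℝ => deriv W (Real.log s - γ * t))
        (deriv (deriv W) (Real.log S - γ * t) * S⁻¹) S :=
      HasDerivAt.comp (h₂ := deriv W) S (hW' (Real.log S - γ * t)).hasDerivAt hin
    have h2 : HasDerivAt (fun s : ℝ => s⁻¹) (-(S ^ 2)⁻¹) S :=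
      hasDerivAt_inv (ne_of_gt hS)
    have h := h1.fun_mul h2
    rw [h.deriv]
    have hS0 : S ≠ 0 := ne_of_gt hS
    field_simp
    ring
  have hpt : ∀ S t : ℝ,
      pt u S t = deriv W (Real.log S - γ * t) * (-γ) := by
    intro S t
    have hin : HasDerivAt (fun τ : ℝ => Real.log S - γ * τ) (-γ) t := by
      simpa using ((hasDerivAt_id t).const_mul γ).const_sub (Real.log S)
    have h := (hW (Real.log S - γ * t)).hasDerivAt.comp t hin
    rw [pt, hu]
    exact h.deriv
  have main : ∀ S : ℝ, 0 < S → ∀ t : ℝ,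
      pt u S t + (1 / 2) * σ ^ 2 * S ^ 2 * pSS u S t * (pS u S t) ^ 2 /
        (pS u S t - c₁ * S * pSS u S t) ^ 2
      = (-γ) * (deriv W (Real.log S - γ * t)
          - κ * (deriv (deriv W) (Real.log S - γ * t) - deriv W (Real.log S - γ * t))
            * (deriv W (Real.log S - γ * t)) ^ 2 /
            (deriv (deriv W) (Real.log S - γ * t)
              - β * deriv W (Real.log S - γ * t)) ^ 2) := by
    intro S hS t
    set z := Real.log S - γ * t with hz
    set a := deriv W z
    set b := deriv (deriv W) z
    have hd : b - β * a ≠ 0 := hden z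
    have hS0 : S ≠ 0 := ne_of_gt hS
    rw [hpS S hS t, hpSS S hS t, hpt S t]
    have e1 : a * S⁻¹ - c₁ * S * ((b - a) * (S ^ 2)⁻¹)
        = -(c₁ * (b - β * a)) * S⁻¹ := by
      rw [hβ]; field_simp; ring
    rw [e1, hκ]
    have hc2 : (c₁ * (b - β * a)) ≠ 0 := mul_ne_zero hc₁ hd
    field_simp
    ring
  constructor
  · constructor
    · intro h z
      have h1 := h (Real.exp z) (Real.exp_pos z) 0
      have h2 := main (Real.exp z) (Real.exp_pos z) 0
      rw [h1] at h2
      have hz : Real.log (Real.exp z) - γ * 0 = z := by simp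
      rw [hz] at h2
      rcases mul_eq_zero.mp h2.symm with h3 | h3
      · exact absurd (neg_eq_zero.mp h3) hγ
      · exact h3
    · intro h S hS t
      rw [main S hS t, h (Real.log S - γ * t)]
      ring
  · have alg : ∀ z : ℝ,
        (deriv W z - κ * (deriv (deriv W) z - deriv W z) * (deriv W z) ^ 2 /
          (deriv (deriv W) z - β * deriv W z) ^ 2 = 0)
        ↔ ((deriv (deriv W) z) ^ 2 - (2 * β + κ) * deriv W z * deriv (deriv W) z +
          (β ^ 2 + κ) * (deriv W z) ^ 2 = 0) := by
      intro z
      set a := deriv W z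
      set b := deriv (deriv W) z
      have hd : b - β * a ≠ 0 := hden z
      have ha : a ≠ 0 := hW0 z
      have key : a - κ * (b - a) * a ^ 2 / (b - β * a) ^ 2
          = a * (b ^ 2 - (2 * β + κ) * a * b + (β ^ 2 + κ) * a ^ 2) / (b - β * a) ^ 2 := by
        rw [eq_div_iff (pow_ne_zero 2 hd), sub_mul, div_mul_cancel₀ _ (pow_ne_zero 2 hd)]
        ring
      rw [key, div_eq_zero_iff]
      constructor
      · rintro (h | h)
        · rcases mul_eq_zero.mp h with h' | h'
          · exact absurd h' ha
          · exact h'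
        · exact absurd h (pow_ne_zero 2 hd)
      · intro h
        left
        rw [h, mul_zero]
    constructor
    · intro h z; exact (alg z).mp (h z)
    · intro h z; exact (alg z).mpr (h z)
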